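/- arXiv:1903.04819 — 3 statements merged into one kernel-verified Lean document; each statement's English description precedes it below -/
import Mathlib

section
/- Radial limits of a function in the commutative resolvent algebra are almost everywhere constant in the directions of any subspace: let X be a finite-dimensional real inner product space, let f ∈ C_R(X), let V ⊆ X be a nonzero linear subspace, and let w ∈ X. Then there exists c ∈ ℂ such that, with respect to the spherical measure on the unit sphere of V (the measure induced on the unit sphere S(V) = {v ∈ V : ‖v‖ = 1} by any Haar (translation-invariant, locally finite, positive) measure on V, e.g. via Mathlib's Measure.toSphere), for almost every v ∈ S(V) the limit lim_{t→+∞} f(t·v + w) exists and equals c. -/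
open Filter Topology
open scoped BoundedContinuousFunction InnerProductSpace

noncomputable section

variable (X : Type*) [NormedAddCommGroup X] [InnerProductSpace ℝ X]

/-- The resolvent functions `h^λ_x : y ↦ 1/(iλ - ⟨x,y⟩)`, as elements of `C_b(X, ℂ)`. -/
def resolventFns : Set (X →ᵇ ℂ) :=
  {f | ∃ (x : X) (l : ℝ), l ≠ 0 ∧
    ∀ y : X, f y = (Complex.I * (l : ℂ) - ((⟪x, y⟫_ℝ : ℝ) : ℂ))⁻¹}

/-- The commutative resolvent algebra `C_R(X)`. -/
def CR : StarSubalgebra ℂ (X →ᵇ ℂ) :=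
  (StarAlgebra.adjoin ℂ (resolventFns X)).topologicalClosure

open MeasureTheory in
/-- the set of functions with a.e.-constant radial limits, as a star-subalgebra -/
def goodAlg (V : Submodule ℝ X) (w : X) [MeasurableSpace V]
    (ν : Measure (Metric.sphere (0 : V) 1)) : StarSubalgebra ℂ (X →ᵇ ℂ) where
  carrier := {f | ∃ c : ℂ, ∀ᵐ (v : Metric.sphere (0 : V) 1) ∂ν,
    Tendsto (fun t : ℝ => f (t • ((v : V) : X) + w)) atTop (𝓝 c)}
  mul_mem' := by
    rintro f g ⟨c, hc⟩ ⟨d, hd⟩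
    exact ⟨c * d, hc.mp (hd.mono fun v h1 h2 => by simpa using h2.mul h1)⟩
  add_mem' := by
    rintro f g ⟨c, hc⟩ ⟨d, hd⟩
    exact ⟨c + d, hc.mp (hd.mono fun v h1 h2 => by simpa using h2.add h1)⟩
  algebraMap_mem' := fun z =>
    ⟨z, Filter.Eventually.of_forall fun v => by simpa using (tendsto_const_nhds :
      Tendsto (fun _ : ℝ => z) atTop (𝓝 z))⟩
  star_mem' := by
    rintro f ⟨c, hc⟩
    exact ⟨starRingEnd ℂ c, hc.mono fun v h1 => by
      simpa [Function.comp_def] using ((Complex.continuous_conj.tendsto c).comp h1)⟩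

set_option synthInstance.maxHeartbeats 1000000 in
open MeasureTheory in
lemma goodAlg_isClosed (V : Submodule ℝ X) (w : X) [MeasurableSpace V]
    (ν : Measure (Metric.sphere (0 : V) 1)) (hν : ν ≠ 0) :
    IsClosed ((goodAlg X V w ν : Set (X →ᵇ ℂ))) := by
  haveI : (MeasureTheory.ae ν).NeBot := ae_neBot.2 hν
  rw [← isSeqClosed_iff_isClosed]
  intro F f hF hlim
  choose c hc using hF
  have key : ∀ n m : ℕ, dist (c n) (c m) ≤ dist (F n) (F m) := by
    intro n m
    obtain ⟨v, hv1, hv2⟩ := ((hc n).and (hc m)).exists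
    refine le_of_tendsto (hv1.dist hv2) ?_
    exact Filter.Eventually.of_forall fun t =>
      BoundedContinuousFunction.dist_coe_le_dist _
  have hcauchy : CauchySeq c := by
    rw [Metric.cauchySeq_iff]
    intro ε hε
    obtain ⟨N, hN⟩ := Metric.cauchySeq_iff.1 hlim.cauchySeq ε hε
    exact ⟨N, fun m hm n hn => lt_of_le_of_lt (key m n) (hN m hm n hn)⟩
  obtain ⟨L, hL⟩ := cauchySeq_tendsto_of_complete hcauchy
  refine ⟨L, ?_⟩
  filter_upwards [ae_all_iff.2 hc] with v hv
  rw [Metric.tendsto_atTop]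
  intro ε hε
  obtain ⟨N1, hN1⟩ := Metric.tendsto_atTop.1 hlim (ε / 3) (by positivity)
  obtain ⟨N2, hN2⟩ := Metric.tendsto_atTop.1 hL (ε / 3) (by positivity)
  set n := max N1 N2
  obtain ⟨T, hT⟩ := Metric.tendsto_atTop.1 (hv n) (ε / 3) (by positivity)
  refine ⟨T, fun t ht => ?_⟩
  have h1 : dist (f (t • ((v : V) : X) + w)) ((F n) (t • ((v : V) : X) + w)) ≤
      dist f (F n) := BoundedContinuousFunction.dist_coe_le_dist _
  have h2 := hT t ht
  have h3 := hN2 n (le_max_right _ _)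
  have h4 : dist f (F n) < ε / 3 := by
    have := hN1 n (le_max_left _ _)
    rwa [dist_comm]
  calc dist (f (t • ((v : V) : X) + w)) L ≤
      dist (f (t • ((v : V) : X) + w)) ((F n) (t • ((v : V) : X) + w)) +
        dist ((F n) (t • ((v : V) : X) + w)) (c n) + dist (c n) L := dist_triangle4 _ _ _ _
    _ < ε := by have h5 := lt_of_le_of_lt h1 h4; linarith

open scoped Pointwise in
open MeasureTheory in
lemma generator_mem_goodAlg [FiniteDimensional ℝ X] (V : Submodule ℝ X) (w : X)
    [MeasurableSpace V] [BorelSpace V] (μ : Measure V) (hμ : μ.IsAddHaarMeasure)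
    (f : X →ᵇ ℂ) (hf : f ∈ resolventFns X) : f ∈ goodAlg X V w μ.toSphere := by
  obtain ⟨x, l, hl, hfy⟩ := hf
  by_cases hx : ∀ v : V, ⟪x, (v : X)⟫_ℝ = 0
  · -- x ⊥ V : the limit is the same constant for every direction
    refine ⟨(Complex.I * l - ((⟪x, w⟫_ℝ : ℝ) : ℂ))⁻¹, Filter.Eventually.of_forall fun v => ?_⟩
    have hconst : ∀ t : ℝ, f (t • ((v : V) : X) + w) =
        (Complex.I * l - ((⟪x, w⟫_ℝ : ℝ) : ℂ))⁻¹ := by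
      intro t
      rw [hfy]
      congr 2
      rw [inner_add_right, real_inner_smul_right, hx (v : V)]
      push_cast
      ring
    simp only [hconst]
    exact tendsto_const_nhds
  · push_neg at hx
    obtain ⟨v0, hv0⟩ := hx
    refine ⟨0, ?_⟩
    -- the kernel of v ↦ ⟪x, v⟫ in V is a proper submodule, hence Haar-null
    set K : Submodule ℝ V := LinearMap.ker ((innerₗ X x).comp V.subtype) with hK
    have hKne : K ≠ ⊤ := by
      intro h
      apply hv0
      have : v0 ∈ K := h ▸ Submodule.mem_top
      simpa [hK, LinearMap.mem_ker] using this
    have hK0 : μ (K : Set V) = 0 := Measure.addHaar_submodule μ K hKne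
    set S0 : Set (Metric.sphere (0 : V) 1) := {v | ⟪x, ((v : V) : X)⟫_ℝ = 0} with hS0def
    have hcont : Continuous fun v : Metric.sphere (0 : V) 1 => ⟪x, ((v : V) : X)⟫_ℝ :=
      Continuous.inner continuous_const (continuous_subtype_val.comp continuous_subtype_val)
    have hmeas : MeasurableSet S0 :=
      (isClosed_singleton.preimage hcont).measurableSet
    have hS0 : μ.toSphere S0 = 0 := by
      rw [μ.toSphere_apply' hmeas]
      have hsub : (Set.Ioo (0 : ℝ) 1 • (Subtype.val '' S0) : Set V) ⊆ (K : Set V) := by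
        rintro z hz
        obtain ⟨r, hr, y, hy, rfl⟩ := Set.mem_smul.1 hz
        obtain ⟨v, hv, rfl⟩ := hy
        refine K.smul_mem r ?_
        simpa [hK, LinearMap.mem_ker, hS0def] using hv
      rw [measure_mono_null hsub hK0, mul_zero]
    have hae : ∀ᵐ (v : Metric.sphere (0 : V) 1) ∂μ.toSphere, ⟪x, ((v : V) : X)⟫_ℝ ≠ 0 := by
      rw [ae_iff]
      simpa only [not_not] using hS0
    filter_upwards [hae] with v hv
    have hfv : ∀ t : ℝ, f (t • ((v : V) : X) + w) =
        (Complex.I * l - ((t * ⟪x, ((v : V) : X)⟫_ℝ + ⟪x, w⟫_ℝ : ℝ) : ℂ))⁻¹ := by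
      intro t
      rw [hfy, inner_add_right, real_inner_smul_right]
    simp only [hfv]
    set a := ⟪x, ((v : V) : X)⟫_ℝ
    set b := ⟪x, w⟫_ℝ
    -- |t * a + b| → ∞
    have haux : Tendsto (fun t : ℝ => |t * a + b|) atTop atTop := by
      have h1 : Tendsto (fun t : ℝ => |a| * t + -|b|) atTop atTop :=
        tendsto_atTop_add_const_right _ _ (tendsto_id.const_mul_atTop (abs_pos.2 hv))
      refine tendsto_atTop_mono' _ ?_ h1
      filter_upwards [eventually_ge_atTop (0 : ℝ)] with t ht
      have h2 : |t * a| ≤ |t * a + b| + |b| := by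
        calc |t * a| = |(t * a + b) + -b| := by ring_nf
          _ ≤ |t * a + b| + |-b| := abs_add_le _ _
          _ = |t * a + b| + |b| := by rw [abs_neg]
      have h3 : |t * a| = |a| * t := by
        rw [abs_mul, abs_of_nonneg ht, mul_comm]
      linarith
    -- the denominator escapes to infinity in norm
    have hnorm : Tendsto (fun t : ℝ =>
        ‖Complex.I * l - ((t * a + b : ℝ) : ℂ)‖) atTop atTop := by
      refine tendsto_atTop_mono (fun t => ?_) haux
      have : (Complex.I * l - ((t * a + b : ℝ) : ℂ)).re = -(t * a + b) := by simp
      calc |t * a + b| = |(Complex.I * l - ((t * a + b : ℝ) : ℂ)).re| := by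
            rw [this, abs_neg]
        _ ≤ ‖Complex.I * l - ((t * a + b : ℝ) : ℂ)‖ := Complex.abs_re_le_norm _
    have hcob : Tendsto (fun t : ℝ => Complex.I * l - ((t * a + b : ℝ) : ℂ)) atTop
        (Bornology.cobounded ℂ) := tendsto_norm_atTop_iff_cobounded.1 hnorm
    exact tendsto_inv₀_cobounded.comp hcob

open MeasureTheory in
/-- radial limits of `f ∈ C_R(X)` are almost everywhere constant in the
directions of any nonzero subspace `V ⊆ X`: there is a `c ∈ ℂ` such that for almost every
`v` in the unit sphere of `V` (w.r.t. the spherical measure induced by any Haar measure on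
`V` via `Measure.toSphere`), the limit `lim_{t → +∞} f(t·v + w)` exists and equals `c`. -/
theorem radial_limit_ae_const (X : Type*) [NormedAddCommGroup X] [InnerProductSpace ℝ X]
    [FiniteDimensional ℝ X]
    (f : X →ᵇ ℂ) (hf : f ∈ CR X) (V : Submodule ℝ X) (hV : V ≠ ⊥) (w : X)
    [MeasurableSpace V] [BorelSpace V]
    (μ : Measure V) (hμ : μ.IsAddHaarMeasure) :
    ∃ c : ℂ, ∀ᵐ (v : Metric.sphere (0 : V) 1) ∂ μ.toSphere,
      Tendsto (fun t : ℝ => f (t • ((v : V) : X) + w)) atTop (𝓝 c) := by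
  by_cases hν : μ.toSphere = 0
  · exact ⟨0, by simp [hν]⟩
  · have hle : CR X ≤ goodAlg X V w μ.toSphere :=
      StarSubalgebra.topologicalClosure_minimal
        (StarAlgebra.adjoin_le fun g hg => generator_mem_goodAlg X V w μ hμ g hg)
        (goodAlg_isClosed X V w μ.toSphere hν)
    exact hle hf
end
end

section
/- Equivalent generation of the commutative resolvent algebra: for any real inner product space X, C_R(X) equals the smallest closed star-subalgebra of C_b(X, ℂ) containing all functions of the form y ↦ g(⟨x, y⟩), where x ranges over X and g ranges over the continuous complex-valued functions on ℝ vanishing at infinity. -/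
open Filter Topology
open scoped BoundedContinuousFunction InnerProductSpace

noncomputable section

variable (X : Type*) [NormedAddCommGroup X] [InnerProductSpace ℝ X]

namespace CRaux

lemma denom_ne_zero {l : ℝ} (hl : l ≠ 0) (t : ℝ) : Complex.I * (l : ℂ) - (t : ℂ) ≠ 0 := by
  intro h
  apply hl
  simpa using congrArg Complex.im h

lemma cont_res {l : ℝ} (hl : l ≠ 0) :
    Continuous fun t : ℝ => (Complex.I * (l:ℂ) - (t:ℂ))⁻¹ :=
  (continuous_const.sub Complex.continuous_ofReal).inv₀ (denom_ne_zero hl)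

lemma tends_res {l : ℝ} (hl : l ≠ 0) :
    Tendsto (fun t : ℝ => (Complex.I * (l:ℂ) - (t:ℂ))⁻¹) (cocompact ℝ) (𝓝 0) := by
  have hnorm : Tendsto (fun t : ℝ => |t|) (cocompact ℝ) atTop := by
    exact tendsto_norm_cocompact_atTop (E := ℝ)
  apply squeeze_zero_norm' (a := fun t : ℝ => |t|⁻¹)
  · filter_upwards [hnorm.eventually_ge_atTop 1] with t ht
    have h1 : |t| ≤ ‖Complex.I * (l:ℂ) - (t:ℂ)‖ := by
      simpa using Complex.abs_re_le_norm (Complex.I * (l:ℂ) - (t:ℂ))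
    have h0 : (0:ℝ) < |t| := lt_of_lt_of_le one_pos ht
    simpa [map_inv₀] using inv_anti₀ h0 h1
  · exact hnorm.inv_tendsto_atTop

/-- Extend a continuous function vanishing at infinity to the one-point compactification. -/
def ext0 {g : ℝ → ℂ} (hg : Continuous g) (hg0 : Tendsto g (cocompact ℝ) (𝓝 0)) :
    C(OnePoint ℝ, ℂ) :=
  OnePoint.continuousMapMk ⟨g, hg⟩ 0 (by rwa [Filter.coclosedCompact_eq_cocompact])

@[simp] lemma ext0_coe {g : ℝ → ℂ} (hg : Continuous g) (hg0 : Tendsto g (cocompact ℝ) (𝓝 0))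
    (t : ℝ) : ext0 hg hg0 (t : OnePoint ℝ) = g t := rfl

@[simp] lemma ext0_infty {g : ℝ → ℂ} (hg : Continuous g) (hg0 : Tendsto g (cocompact ℝ) (𝓝 0)) :
    ext0 hg hg0 (OnePoint.infty : OnePoint ℝ) = 0 := rfl

/-- The resolvent function on `ℝ`, extended to the one-point compactification. -/
def Hres (l : ℝ) (hl : l ≠ 0) : C(OnePoint ℝ, ℂ) := ext0 (cont_res hl) (tends_res hl)

/-- The generating set on the compactification. -/
def Sres : Set C(OnePoint ℝ, ℂ) := {F | ∃ (l : ℝ) (hl : l ≠ 0), F = Hres l hl}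

/-- Stone–Weierstrass: the resolvent functions generate everything on `OnePoint ℝ`. -/
lemma Ares_closure_eq_top :
    (StarAlgebra.adjoin ℂ Sres).topologicalClosure = ⊤ := by
  apply ContinuousMap.starSubalgebra_topologicalClosure_eq_top_of_separatesPoints
  intro z w hzw
  refine ⟨Hres 1 one_ne_zero, ⟨Hres 1 one_ne_zero,
    StarAlgebra.subset_adjoin ℂ _ ⟨1, one_ne_zero, rfl⟩, rfl⟩, ?_⟩
  induction z using OnePoint.rec with
  | infty =>
    induction w using OnePoint.rec with
    | infty => exact absurd rfl hzw
    | coe t =>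
      simp only [Hres, ext0_infty, ext0_coe]
      exact fun h => denom_ne_zero one_ne_zero t (by simpa using (inv_eq_zero.mp h.symm))
  | coe t =>
    induction w using OnePoint.rec with
    | infty =>
      simp only [Hres, ext0_infty, ext0_coe]
      exact fun h => denom_ne_zero one_ne_zero t (by simpa using (inv_eq_zero.mp h))
    | coe s =>
      simp only [Hres, ext0_coe]
      intro h
      apply hzw
      have := inv_inj.mp h
      have hts : (t : ℂ) = (s : ℂ) := by linear_combination -this
      norm_cast at hts
      rw [hts]

variable {X : Type*} [NormedAddCommGroup X] [InnerProductSpace ℝ X]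

/-- The map `y ↦ ⟨x,y⟩`, as a continuous map into `OnePoint ℝ`. -/
def ipc (x : X) : C(X, OnePoint ℝ) :=
  ⟨fun y => ((⟪x, y⟫_ℝ : ℝ) : OnePoint ℝ),
    OnePoint.continuous_coe.comp (Continuous.inner continuous_const continuous_id)⟩

/-- Pullback star algebra homomorphism along `y ↦ ⟨x,y⟩`. -/
def pullT (x : X) : C(OnePoint ℝ, ℂ) →⋆ₐ[ℂ] (X →ᵇ ℂ) where
  toFun F := (BoundedContinuousFunction.mkOfCompact F).compContinuous (ipc x)
  map_one' := by ext y; rfl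
  map_mul' F G := by ext y; rfl
  map_zero' := by ext y; rfl
  map_add' F G := by ext y; rfl
  commutes' c := by ext y; rfl
  map_star' F := by ext y; rfl

lemma pullT_apply (x : X) (F : C(OnePoint ℝ, ℂ)) (y : X) :
    pullT x F y = F ((⟪x, y⟫_ℝ : ℝ) : OnePoint ℝ) := rfl

lemma pullT_continuous (x : X) : Continuous (pullT x) := by
  have h1 : Isometry (BoundedContinuousFunction.mkOfCompact (α := OnePoint ℝ) (β := ℂ)) :=
    Isometry.of_dist_eq fun f g => BoundedContinuousFunction.dist_mkOfCompact f g
  exact (BoundedContinuousFunction.continuous_compContinuous (ipc x)).comp h1.continuous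

/-- Pullbacks of generators land in the resolvent functions. -/
lemma pullT_Sres_subset (x : X) : pullT x '' Sres ⊆ resolventFns X := by
  rintro _ ⟨F, ⟨l, hl, rfl⟩, rfl⟩
  exact ⟨x, l, hl, fun y => rfl⟩

/-- The key containment: any pullback of a `C₀` function is in `C_R(X)`. -/
lemma pull_mem_CR (x : X) {g : ℝ → ℂ} (hg : Continuous g)
    (hg0 : Tendsto g (cocompact ℝ) (𝓝 0)) (f : X →ᵇ ℂ)
    (hf : ∀ y : X, f y = g (⟪x, y⟫_ℝ)) : f ∈ CR X := by
  have hfT : f = pullT x (ext0 hg hg0) := by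
    ext y
    rw [hf y, pullT_apply]
    rfl
  have hG : ext0 hg hg0 ∈ closure ((StarAlgebra.adjoin ℂ Sres : StarSubalgebra ℂ _) : Set _) := by
    have : ext0 hg hg0 ∈ (StarAlgebra.adjoin ℂ Sres).topologicalClosure := by
      rw [Ares_closure_eq_top]; trivial
    exact this
  have hmaps : Set.MapsTo (pullT x)
      ((StarAlgebra.adjoin ℂ Sres : StarSubalgebra ℂ _) : Set _)
      ((StarAlgebra.adjoin ℂ (resolventFns X) : StarSubalgebra ℂ _) : Set _) := by
    intro a ha
    have h1 : pullT x a ∈ StarSubalgebra.map (pullT x) (StarAlgebra.adjoin ℂ Sres) :=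
      ⟨a, ha, rfl⟩
    rw [StarAlgHom.map_adjoin] at h1
    exact StarAlgebra.adjoin_le
      ((pullT_Sres_subset x).trans (StarAlgebra.subset_adjoin ℂ _)) h1
  have : pullT x (ext0 hg hg0) ∈
      closure ((StarAlgebra.adjoin ℂ (resolventFns X) : StarSubalgebra ℂ _) : Set _) :=
    map_mem_closure (pullT_continuous x) hG hmaps
  rw [hfT]
  exact this

end CRaux

/-- equivalent generation of the commutative resolvent algebra: `C_R(X)` equals
the smallest closed star-subalgebra of `C_b(X, ℂ)` containing all functions `y ↦ g(⟨x, y⟩)`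
with `x ∈ X` and `g : ℝ → ℂ` continuous and vanishing at infinity. -/
theorem CR_eq_adjoin_C0_pullbacks (X : Type*) [NormedAddCommGroup X]
    [InnerProductSpace ℝ X] :
    CR X = (StarAlgebra.adjoin ℂ
      {f : X →ᵇ ℂ | ∃ (x : X) (g : ℝ → ℂ), Continuous g ∧
        Tendsto g (cocompact ℝ) (𝓝 0) ∧
        ∀ y : X, f y = g (⟪x, y⟫_ℝ)}).topologicalClosure := by
  apply le_antisymm
  · apply StarSubalgebra.topologicalClosure_mono
    apply StarAlgebra.adjoin_le
    rintro f ⟨x, l, hl, hf⟩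
    exact StarAlgebra.subset_adjoin ℂ _
      ⟨x, fun t => (Complex.I * (l:ℂ) - (t:ℂ))⁻¹, CRaux.cont_res hl, CRaux.tends_res hl, hf⟩
  · apply StarSubalgebra.topologicalClosure_minimal
    · apply StarAlgebra.adjoin_le
      rintro f ⟨x, g, hg, hg0, hf⟩
      exact CRaux.pull_mem_CR x hg hg0 f hf
    · exact StarSubalgebra.isClosed_topologicalClosure _
end
end

section
/- Compatibility of commutative resolvent algebras along orthogonal projections: let X be a real inner product space, let V ⊆ X be a finite-dimensional subspace with orthogonal projection P_V : X → V, and let f ∈ C_R(V), where V is regarded as a real inner product space in its own right. Then the pullback f ∘ P_V belongs to C_R(X). -/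
open Filter Topology
open scoped BoundedContinuousFunction InnerProductSpace

noncomputable section

variable (X : Type*) [NormedAddCommGroup X] [InnerProductSpace ℝ X]

/-- Pullback along a continuous map, as a star algebra homomorphism. -/
def pullbackHom {Y Z : Type*} [TopologicalSpace Y] [TopologicalSpace Z] (g : C(Z, Y)) :
    (Y →ᵇ ℂ) →⋆ₐ[ℂ] (Z →ᵇ ℂ) where
  toFun h := h.compContinuous g
  map_one' := rfl
  map_mul' _ _ := rfl
  map_zero' := rfl
  map_add' _ _ := rfl
  commutes' _ := rfl
  map_star' _ := rfl

/-- compatibility of commutative resolvent algebras along orthogonal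
projections: for a finite dimensional subspace `V ⊆ X` and `f ∈ C_R(V)` (with `V` regarded as
a real inner product space in its own right), the pullback `f ∘ P_V` belongs to `C_R(X)`. -/
theorem CR_pullback_orthogonalProjection (X : Type*) [NormedAddCommGroup X]
    [InnerProductSpace ℝ X] (V : Submodule ℝ X) [FiniteDimensional ℝ V]
    (f : ↥V →ᵇ ℂ) (hf : f ∈ CR ↥V)
    (F : X →ᵇ ℂ) (hF : ∀ y : X, F y = f (V.orthogonalProjectionOnto y)) :
    F ∈ CR X := by
  set P : C(X, ↥V) := ⟨fun y => V.orthogonalProjectionOnto y,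
    (V.orthogonalProjectionOnto).continuous⟩ with hP
  have hPapp : ∀ y : X, P y = V.orthogonalProjectionOnto y := fun _ => rfl
  have hFeq : F = pullbackHom P f := by
    ext y
    simp [pullbackHom, hF y, hPapp]
    rfl
  -- the pullback maps generators to generators
  have hgen : (pullbackHom P) '' resolventFns ↥V ⊆ resolventFns X := by
    rintro _ ⟨h, ⟨x, l, hl, hx⟩, rfl⟩
    refine ⟨(x : X), l, hl, fun y => ?_⟩
    have key : ⟪x, V.orthogonalProjectionOnto y⟫_ℝ = ⟪(x : X), y⟫_ℝ := by
      rw [Submodule.inner_orthogonalProjectionOnto_eq_of_mem_left]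
    have h1 : (pullbackHom P h) y = h (V.orthogonalProjectionOnto y) := rfl
    rw [h1, hx, key]
  -- the pullback maps the adjoin into the adjoin
  have hmaps : Set.MapsTo (pullbackHom P)
      (StarAlgebra.adjoin ℂ (resolventFns ↥V) : Set (↥V →ᵇ ℂ))
      (StarAlgebra.adjoin ℂ (resolventFns X) : Set (X →ᵇ ℂ)) := by
    intro g hg
    have : pullbackHom P g ∈ (StarAlgebra.adjoin ℂ (resolventFns ↥V)).map (pullbackHom P) :=
      ⟨g, hg, rfl⟩
    rw [StarAlgHom.map_adjoin] at this
    exact StarAlgebra.adjoin_le ((StarAlgebra.subset_adjoin ℂ _).trans' hgen) this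
  have hcont : Continuous (pullbackHom P : (↥V →ᵇ ℂ) → (X →ᵇ ℂ)) :=
    BoundedContinuousFunction.continuous_compContinuous P
  rw [hFeq]
  exact map_mem_closure hcont hf hmaps
end
end
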